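/- Saturation is functorial: if f : (X, dX) → (Y, dY) is a morphism of d-spaces, then f maps weakly directed paths to weakly directed paths, i.e., f is also a morphism of d-spaces (X, d̂X) → (Y, d̂Y). -/
import Mathlib


open unitInterval Topology Set

/-- Concatenation of two continuous paths `p q : C(I, X)` with `p 1 = q 0`,
traversing `p` on `[0, 1/2]` and `q` on `[1/2, 1]` (both at double speed). -/
noncomputable def concatPath {X : Type*} [TopologicalSpace X]
    (p q : C(unitInterval, X)) (h : p 1 = q 0) : C(unitInterval, X) :=
  ((⟨p, rfl, rfl⟩ : Path (p 0) (p 1)).trans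
    ((⟨q, rfl, rfl⟩ : Path (q 0) (q 1)).cast h rfl)).toContinuousMap

/-- A d-space structure on a topological space `X`: a set of continuous paths
`I → X` containing the constant paths, closed under concatenation and under
precomposition with continuous non-decreasing maps `I → I`. -/
structure DSpace (X : Type*) [TopologicalSpace X] where
  d : Set C(unitInterval, X)
  const_mem : ∀ x : X, ContinuousMap.const unitInterval x ∈ d
  concat_mem : ∀ p ∈ d, ∀ q ∈ d, ∀ h : p 1 = q 0, concatPath p q h ∈ d
  reparam_mem : ∀ p ∈ d, ∀ φ : C(unitInterval, unitInterval), Monotone ⇑φ → p.comp φ ∈ d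

/-- `c` is a directed function on the (open) set `U` for the set of directed
paths `d`: it is continuous on `U` and non-decreasing along every directed path
with image contained in `U`. -/
def IsDirectedFn {X : Type*} [TopologicalSpace X] (d : Set C(unitInterval, X))
    (U : Set X) (c : X → unitInterval) : Prop :=
  ContinuousOn c U ∧ ∀ p ∈ d, Set.range ⇑p ⊆ U → Monotone (c ∘ ⇑p)

/-- A path `p` is weakly directed when, for every directed function `c` on an
open `U`, the map `c ∘ p` is locally non-decreasing on `p ⁻¹' U`. -/
def IsWeaklyDirected {X : Type*} [TopologicalSpace X] (d : Set C(unitInterval, X))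
    (p : C(unitInterval, X)) : Prop :=
  ∀ U : Set X, IsOpen U → ∀ c : X → unitInterval, IsDirectedFn d U c →
    ∀ t : unitInterval, p t ∈ U →
      ∃ V ∈ 𝓝 t, V ⊆ ⇑p ⁻¹' U ∧ MonotoneOn (c ∘ ⇑p) V

/-- The set `d̂X` of weakly directed paths. -/
def satPaths {X : Type*} [TopologicalSpace X] (d : Set C(unitInterval, X)) :
    Set C(unitInterval, X) :=
  {p | IsWeaklyDirected d p}

/-- A set of directed paths is saturated when every weakly directed path is directed. -/
def IsSaturated {X : Type*} [TopologicalSpace X] (d : Set C(unitInterval, X)) : Prop :=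
  satPaths d = d

/-- Saturation is functorial: a morphism of d-spaces `f : (X, dX) → (Y, dY)` maps
weakly directed paths to weakly directed paths, i.e. it is also a morphism
`(X, d̂X) → (Y, d̂Y)`. -/
theorem stmt_4 {X Y : Type*} [TopologicalSpace X] [TopologicalSpace Y]
    (D : DSpace X) (E : DSpace Y) (f : C(X, Y))
    (hf : ∀ p ∈ D.d, f.comp p ∈ E.d) :
    ∀ p ∈ satPaths D.d, f.comp p ∈ satPaths E.d := by
  intro p hp U hU c hc t ht
  have hc' : IsDirectedFn D.d (⇑f ⁻¹' U) (c ∘ ⇑f) := by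
    refine ⟨hc.1.comp f.continuous.continuousOn (fun x hx => hx), ?_⟩
    intro q hq hrange
    have := hc.2 (f.comp q) (hf q hq) ?_
    · exact this
    · rintro y ⟨s, rfl⟩
      exact hrange ⟨s, rfl⟩
  obtain ⟨V, hV, hVsub, hmono⟩ := hp (⇑f ⁻¹' U) (hU.preimage f.continuous)
    (c ∘ ⇑f) hc' t ht
  exact ⟨V, hV, hVsub, hmono⟩
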